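/- For s ≥ 1, ∫_0^{[s]-1/4} cos(2πx)/√(s² - x²) dx < 0, where [s] is the floor of s. -/
import Mathlib


open Real

noncomputable def gg (s x : ℝ) : ℝ := Real.cos (2 * π * x) / Real.sqrt (s ^ 2 - x ^ 2)

lemma gg_cont (s : ℝ) : ContinuousOn (gg s) (Set.Ioo (-s) s) := by
  apply ContinuousOn.div
  · exact (Real.continuous_cos.comp (continuous_const.mul continuous_id)).continuousOn
  · exact (Real.continuous_sqrt.comp (continuous_const.sub (continuous_pow 2))).continuousOn
  · intro x hx
    have hx2 : x ^ 2 < s ^ 2 := by nlinarith [hx.1, hx.2]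
    have : 0 < Real.sqrt (s ^ 2 - x ^ 2) := Real.sqrt_pos.mpr (by linarith)
    exact ne_of_gt this

lemma gg_intble (s u v : ℝ) (h1 : -s < u) (h2 : u ≤ v) (h3 : v < s) :
    IntervalIntegrable (gg s) MeasureTheory.volume u v := by
  apply ((gg_cont s).mono ?_).intervalIntegrable
  rw [Set.uIcc_of_le h2]
  intro x hx
  exact ⟨lt_of_lt_of_le h1 hx.1, lt_of_le_of_lt hx.2 h3⟩

lemma cos_reflect (k : ℕ) (x : ℝ) :
    Real.cos (2 * π * (2*(k : ℝ) + 1/2 - x)) = - Real.cos (2 * π * x) := by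
  have h : 2 * π * (2*(k : ℝ) + 1/2 - x) = (π - 2 * π * x) + ((2*k : ℤ)) * (2 * π) := by
    push_cast; ring
  rw [h, Real.cos_add_int_mul_two_pi, Real.cos_pi_sub]

lemma pair (s : ℝ) (k : ℕ) (hk : (k : ℝ) + 3/4 < s) :
    (∫ x in ((k:ℝ) - 1/4)..((k:ℝ) + 3/4), gg s x) ≤ 0 := by
  have hk0 : (0:ℝ) ≤ k := Nat.cast_nonneg k
  have hs0 : (0:ℝ) < s := by linarith
  have hns : -s < (k:ℝ) - 1/4 := by linarith
  have hint1 : IntervalIntegrable (gg s) MeasureTheory.volume ((k:ℝ) - 1/4) ((k:ℝ) + 1/4) :=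
    gg_intble s _ _ hns (by linarith) (by linarith)
  have hint2 : IntervalIntegrable (gg s) MeasureTheory.volume ((k:ℝ) + 1/4) ((k:ℝ) + 3/4) :=
    gg_intble s _ _ (by linarith) (by linarith) (by linarith)
  have hsplit := intervalIntegral.integral_add_adjacent_intervals hint1 hint2
  have hrefl : (∫ x in ((k:ℝ) + 1/4)..((k:ℝ) + 3/4), gg s x)
      = ∫ x in ((k:ℝ) - 1/4)..((k:ℝ) + 1/4), gg s (2*(k:ℝ) + 1/2 - x) := by
    rw [intervalIntegral.integral_comp_sub_left (gg s) (2*(k:ℝ) + 1/2)]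
    congr 1 <;> ring
  have hint2' : IntervalIntegrable (fun x => gg s (2*(k:ℝ) + 1/2 - x)) MeasureTheory.volume
      ((k:ℝ) - 1/4) ((k:ℝ) + 1/4) := by
    have h := hint2.comp_sub_left (2*(k:ℝ) + 1/2)
    have e1 : 2*(k:ℝ) + 1/2 - ((k:ℝ) + 1/4) = (k:ℝ) + 1/4 := by ring
    have e2 : 2*(k:ℝ) + 1/2 - ((k:ℝ) + 3/4) = (k:ℝ) - 1/4 := by ring
    rw [e1, e2] at h
    exact h.symm
  have hcomb : (∫ x in ((k:ℝ) - 1/4)..((k:ℝ) + 3/4), gg s x)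
      = ∫ x in ((k:ℝ) - 1/4)..((k:ℝ) + 1/4), (gg s x + gg s (2*(k:ℝ) + 1/2 - x)) := by
    rw [intervalIntegral.integral_add hint1 hint2', ← hrefl, hsplit]
  rw [hcomb]
  have hnn : 0 ≤ ∫ x in ((k:ℝ) - 1/4)..((k:ℝ) + 1/4),
      (fun x => -(gg s x + gg s (2*(k:ℝ) + 1/2 - x))) x := by
    apply intervalIntegral.integral_nonneg (by linarith : (k:ℝ) - 1/4 ≤ (k:ℝ) + 1/4)
    intro x hx
    obtain ⟨hx1, hx2⟩ := hx
    rw [neg_nonneg]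
    show gg s x + gg s (2*(k:ℝ) + 1/2 - x) ≤ 0
    obtain ⟨y, hy⟩ : ∃ y, 2*(k:ℝ) + 1/2 - x = y := ⟨_, rfl⟩
    rw [hy]
    have hyx : x ≤ y := by rw [← hy]; linarith
    have hynx : -x ≤ y := by rw [← hy]; linarith
    have hylo : (k:ℝ) + 1/4 ≤ y := by rw [← hy]; linarith
    have hyhi : y ≤ (k:ℝ) + 3/4 := by rw [← hy]; linarith
    have hy2 : y ^ 2 < s ^ 2 := by
      nlinarith [mul_pos (show 0 < s - y by linarith) (show 0 < s + y by linarith)]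
    have hx2y : x ^ 2 ≤ y ^ 2 := by nlinarith
    have hsy : 0 < Real.sqrt (s ^ 2 - y ^ 2) := Real.sqrt_pos.mpr (by linarith)
    have hsx : Real.sqrt (s ^ 2 - y ^ 2) ≤ Real.sqrt (s ^ 2 - x ^ 2) :=
      Real.sqrt_le_sqrt (by linarith)
    have hcos : 0 ≤ Real.cos (2 * π * x) := by
      have h1 : Real.cos (2 * π * x) = Real.cos (2 * π * (x - k)) := by
        have : 2 * π * x = 2 * π * (x - (k:ℝ)) + (k : ℤ) * (2 * π) := by push_cast; ring
        rw [this, Real.cos_add_int_mul_two_pi]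
      rw [h1]
      apply Real.cos_nonneg_of_mem_Icc
      constructor
      · nlinarith [Real.pi_pos]
      · nlinarith [Real.pi_pos]
    have hgy : gg s y = - Real.cos (2 * π * x) / Real.sqrt (s ^ 2 - y ^ 2) := by
      rw [gg, ← hy, cos_reflect, hy]
    rw [hgy, gg, neg_div]
    have hdle : Real.cos (2 * π * x) / Real.sqrt (s ^ 2 - x ^ 2)
        ≤ Real.cos (2 * π * x) / Real.sqrt (s ^ 2 - y ^ 2) :=
      div_le_div_of_nonneg_left hcos hsy hsx
    linarith
  simp only [intervalIntegral.integral_neg] at hnn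
  linarith

lemma base_pos (s : ℝ) (hs : 1 ≤ s) :
    0 < ∫ x in (-(1/4):ℝ)..0, gg s x := by
  apply intervalIntegral.intervalIntegral_pos_of_pos_on
  · exact gg_intble s _ _ (by linarith) (by norm_num) (by linarith)
  · intro x hx
    obtain ⟨hx1, hx2⟩ := hx
    have hcos : 0 < Real.cos (2 * π * x) := by
      apply Real.cos_pos_of_mem_Ioo
      constructor
      · nlinarith [Real.pi_pos]
      · nlinarith [Real.pi_pos]
    have hx2s : x ^ 2 < s ^ 2 := by nlinarith
    have : 0 < Real.sqrt (s ^ 2 - x ^ 2) := Real.sqrt_pos.mpr (by linarith)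
    exact div_pos hcos this
  · norm_num

theorem stmt4 (s : ℝ) (hs : 1 ≤ s) :
    (∫ x in (0:ℝ)..((⌊s⌋ : ℝ) - 1/4),
        Real.cos (2 * π * x) / Real.sqrt (s ^ 2 - x ^ 2)) < 0 := by
  have hfl : (1:ℤ) ≤ ⌊s⌋ := by
    exact_mod_cast Int.le_floor.mpr (by exact_mod_cast hs)
  set n : ℕ := ⌊s⌋.toNat with hn
  have hcast : ((n:ℝ)) = (⌊s⌋ : ℝ) := by
    rw [hn]; exact_mod_cast Int.toNat_of_nonneg (by linarith)
  have hn1 : 1 ≤ n := by omega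
  have hns : (n:ℝ) ≤ s := by rw [hcast]; exact Int.floor_le s
  -- adjacent intervals
  set a : ℕ → ℝ := fun i => (i:ℝ) - 1/4 with ha
  have hint : ∀ i, i < n → IntervalIntegrable (gg s) MeasureTheory.volume (a i) (a (i+1)) := by
    intro i hi
    apply gg_intble s
    · simp only [ha]; push_cast; nlinarith [Nat.cast_nonneg (α := ℝ) i]
    · simp only [ha]; push_cast; linarith
    · simp only [ha]
      have : (i:ℝ) + 1 ≤ (n:ℝ) := by exact_mod_cast Nat.succ_le_of_lt hi
      push_cast; linarith
  have hsum := intervalIntegral.sum_integral_adjacent_intervals hint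
  have hterm : ∀ i ∈ Finset.range n, (∫ x in (a i)..(a (i+1)), gg s x) ≤ 0 := by
    intro i hi
    have hi' : i < n := Finset.mem_range.mp hi
    have h1 : (i:ℝ) + 1 ≤ (n:ℝ) := by exact_mod_cast Nat.succ_le_of_lt hi'
    have := pair s i (by linarith)
    have heq : a (i+1) = (i:ℝ) + 3/4 := by simp only [ha]; push_cast; ring
    rwa [heq, ha]
  have htot : (∫ x in (a 0)..(a n), gg s x) ≤ 0 := by
    rw [← hsum]
    exact Finset.sum_nonpos hterm
  have ha0 : a 0 = -(1/4) := by simp [ha]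
  have han : a n = (n:ℝ) - 1/4 := by simp [ha]
  have hI1 : IntervalIntegrable (gg s) MeasureTheory.volume (-(1/4)) 0 :=
    gg_intble s _ _ (by linarith) (by norm_num) (by linarith)
  have hI2 : IntervalIntegrable (gg s) MeasureTheory.volume 0 ((n:ℝ) - 1/4) := by
    apply gg_intble s _ _ (by linarith) _ (by linarith)
    have : (1:ℝ) ≤ (n:ℝ) := by exact_mod_cast hn1
    linarith
  have hadj := intervalIntegral.integral_add_adjacent_intervals hI1 hI2
  have hbase := base_pos s hs
  have hmain : (∫ x in (0:ℝ)..((n:ℝ) - 1/4), gg s x) < 0 := by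
    rw [ha0, han] at htot
    linarith
  rw [← hcast]
  exact hmain
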